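/- Let R be a commutative local noetherian ring with maximal ideal m, Λ a module-finite R-algebra, and I a two-sided ideal of Λ with I ⊆ mΛ. For two-term complexes P, Q of finitely generated projective Λ-modules, Hom_{K^b(proj Λ)}(P, Q[1]) = 0 if and only if Hom_{K^b(proj Λ/I)}(P̄, Q̄[1]) = 0, where P̄ and Q̄ denote the reductions Λ/I ⊗_Λ P and Λ/I ⊗_Λ Q. -/

import Mathlib

open IsLocalRing

/-- **Nakayama reduction for `Hom(P, Q[1])` of 2-term complexes.**
Let `R` be a commutative local noetherian ring with maximal ideal `m`, `Λ` a
module-finite `R`-algebra, and `I` a two-sided ideal of `Λ` with `I ⊆ mΛ`.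
For two-term complexes `P = (P₁ --α--> P₀)`, `Q = (Q₁ --β--> Q₀)` of finitely
generated projective `Λ`-modules, `Hom_{K^b(proj Λ)}(P, Q[1]) = 0` if and only if
`Hom_{K^b(proj Λ/I)}(P̄, Q̄[1]) = 0`.  The first condition is the surjectivity of
`γ(f,g) = g∘α − β∘f`, and the second (via projectivity) says that every
`h : P₁ → Q₀` agrees with some `γ(f,g)` up to a map with values in `I·Q₀`. -/
theorem hom_two_term_vanishing_iff_reduction
    (R : Type*) [CommRing R] [IsNoetherianRing R] [IsLocalRing R]
    (Λ : Type*) [Ring Λ] [Algebra R Λ] [Module.Finite R Λ]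
    (I : Ideal Λ) (hI_twosided : ∀ a ∈ I, ∀ b : Λ, a * b ∈ I)
    (hImΛ : I ≤ Submodule.span Λ ((algebraMap R Λ) '' (maximalIdeal R : Set R)))
    (P₁ P₀ Q₁ Q₀ : Type*)
    [AddCommGroup P₁] [Module Λ P₁] [Module.Finite Λ P₁] [Module.Projective Λ P₁]
    [AddCommGroup P₀] [Module Λ P₀] [Module.Finite Λ P₀] [Module.Projective Λ P₀]
    [AddCommGroup Q₁] [Module Λ Q₁] [Module.Finite Λ Q₁] [Module.Projective Λ Q₁]
    [AddCommGroup Q₀] [Module Λ Q₀] [Module.Finite Λ Q₀] [Module.Projective Λ Q₀]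
    (α : P₁ →ₗ[Λ] P₀) (β : Q₁ →ₗ[Λ] Q₀)
    -- `I·Q₀`
    (NQ₀ : Submodule Λ Q₀)
    (hNQ₀ : NQ₀ = Submodule.span Λ {x : Q₀ | ∃ i ∈ I, ∃ q : Q₀, x = i • q}) :
    -- `Hom_{K(Λ)}(P, Q[1]) = 0 ↔ Hom_{K(Λ/I)}(P̄, Q̄[1]) = 0`
    ((∀ h : P₁ →ₗ[Λ] Q₀, ∃ (f : P₁ →ₗ[Λ] Q₁) (g : P₀ →ₗ[Λ] Q₀),
        h = g.comp α - β.comp f) ↔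
      (∀ h : P₁ →ₗ[Λ] Q₀, ∃ (f : P₁ →ₗ[Λ] Q₁) (g : P₀ →ₗ[Λ] Q₀),
        ∀ p : P₁, h p - (g (α p) - β (f p)) ∈ NQ₀)) := by
  constructor
  · -- easy direction
    intro H h
    obtain ⟨f, g, hfg⟩ := H h
    exact ⟨f, g, fun p => by simp [hfg]⟩
  · intro H
    -- set up `R`-module structures via `algebraMap R Λ`
    letI : Module R P₁ := Module.compHom P₁ (algebraMap R Λ)
    letI : Module R Q₁ := Module.compHom Q₁ (algebraMap R Λ)
    letI : Module R Q₀ := Module.compHom Q₀ (algebraMap R Λ)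
    haveI : IsScalarTower R Λ P₁ :=
      ⟨fun r l p => by
        show ((r • l) : Λ) • p = (algebraMap R Λ r) • l • p
        rw [Algebra.smul_def, mul_smul]⟩
    haveI : IsScalarTower R Λ Q₁ :=
      ⟨fun r l p => by
        show ((r • l) : Λ) • p = (algebraMap R Λ r) • l • p
        rw [Algebra.smul_def, mul_smul]⟩
    haveI : IsScalarTower R Λ Q₀ :=
      ⟨fun r l p => by
        show ((r • l) : Λ) • p = (algebraMap R Λ r) • l • p
        rw [Algebra.smul_def, mul_smul]⟩
    haveI : SMulCommClass Λ R Q₀ :=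
      ⟨fun l r x => by
        show l • (algebraMap R Λ r) • x = (algebraMap R Λ r) • l • x
        rw [← mul_smul, ← mul_smul, Algebra.commutes]⟩
    haveI : SMulCommClass Λ R Q₁ :=
      ⟨fun l r x => by
        show l • (algebraMap R Λ r) • x = (algebraMap R Λ r) • l • x
        rw [← mul_smul, ← mul_smul, Algebra.commutes]⟩
    haveI : Module.Finite R Q₀ := Module.Finite.trans Λ Q₀
    set m : Ideal R := maximalIdeal R with hm
    -- `NQ₀ ⊆ m • Q₀` (as an `R`-submodule)
    set S : Submodule R Q₀ := m • ⊤ with hS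
    have Sclosed : ∀ (l : Λ) (x : Q₀), x ∈ S → l • x ∈ S := by
      intro l x hx
      refine Submodule.smul_induction_on hx ?_ ?_
      · intro r hr q _
        have : l • r • q = r • (l • q) := smul_comm l r q
        rw [this]
        exact Submodule.smul_mem_smul hr Submodule.mem_top
      · intro x y hx hy
        rw [smul_add]; exact Submodule.add_mem _ hx hy
    have hNS : ∀ x ∈ NQ₀, x ∈ S := by
      intro x hx
      rw [hNQ₀] at hx
      refine Submodule.span_induction ?_ (Submodule.zero_mem S)
        (fun a b _ _ ha hb => Submodule.add_mem S ha hb)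
        (fun l a _ ha => Sclosed l a ha) hx
      rintro y ⟨i, hiI, q, rfl⟩
      -- `i ∈ span Λ (algebraMap '' m)`, so `i • q ∈ S`
      have hi := hImΛ hiI
      refine Submodule.span_induction (p := fun i _ => i • q ∈ S) ?_ ?_ ?_ ?_ hi
      · rintro y ⟨r, hr, rfl⟩
        show (algebraMap R Λ r) • q ∈ S
        have : (algebraMap R Λ r) • q = r • q := rfl
        rw [this]
        exact Submodule.smul_mem_smul hr Submodule.mem_top
      · show (0 : Λ) • q ∈ S
        rw [zero_smul]; exact Submodule.zero_mem S
      · intro a b _ _ ha hb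
        show (a + b) • q ∈ S
        rw [add_smul]; exact Submodule.add_mem S ha hb
      · intro l a _ ha
        show (l • a) • q ∈ S
        have : (l • a) • q = l • (a • q) := by
          rw [smul_eq_mul, mul_smul]
        rw [this]
        exact Sclosed l _ ha
    -- a finite projective presentation of `P₁`
    obtain ⟨n, s, hs⟩ := Module.Finite.exists_fin (R := Λ) (M := P₁)
    let π : (Fin n → Λ) →ₗ[Λ] P₁ :=
      { toFun := fun v => ∑ i, v i • s i
        map_add' := by
          intro v w
          simp [add_smul, Finset.sum_add_distrib]
        map_smul' := by
          intro l v
          simp [Pi.smul_apply, smul_eq_mul, mul_smul, Finset.smul_sum] }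
    have hπsurj : Function.Surjective π := by
      rw [← LinearMap.range_eq_top]
      rw [← top_le_iff, ← hs, Submodule.span_le]
      rintro x ⟨i, rfl⟩
      refine ⟨Pi.single i 1, ?_⟩
      show (∑ j, Pi.single (M := fun _ => Λ) i 1 j • s j) = s i
      simp [Pi.single_apply, ite_smul]
    obtain ⟨σ, hσ⟩ := Module.projective_lifting_property π LinearMap.id hπsurj
    have hσ' : ∀ p : P₁, π (σ p) = p := fun p => congrArg (· p) hσ
    -- the elementary maps `E i q : p ↦ σ p i • q`
    let e : Fin n → Q₀ → (P₁ →ₗ[Λ] Q₀) := fun i q =>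
      { toFun := fun p => σ p i • q
        map_add' := by intro p p'; simp [add_smul]
        map_smul' := by
          intro l p
          show σ (l • p) i • q = l • (σ p i • q)
          rw [map_smul, Pi.smul_apply, smul_eq_mul, mul_smul] }
    let E : Fin n → Q₀ →ₗ[R] (P₁ →ₗ[Λ] Q₀) := fun i =>
      { toFun := e i
        map_add' := by
          intro q q'; ext p; show σ p i • (q + q') = σ p i • q + σ p i • q'
          rw [smul_add]
        map_smul' := by
          intro r q; ext p
          show σ p i • (r • q) = r • (σ p i • q)
          exact smul_comm _ _ _ }
    -- key: a map with values in `NQ₀` lies in `m • ⊤`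
    have key1 : ∀ h : P₁ →ₗ[Λ] Q₀, (∀ p : P₁, h p ∈ NQ₀) →
        h ∈ (m • ⊤ : Submodule R (P₁ →ₗ[Λ] Q₀)) := by
      intro h hh
      have hdecomp : h = ∑ i, E i (h (s i)) := by
        ext p
        calc h p = h (π (σ p)) := by rw [hσ' p]
          _ = ∑ i, σ p i • h (s i) := by
              show h (∑ i, σ p i • s i) = _
              rw [map_sum]
              exact Finset.sum_congr rfl fun i _ => h.map_smul _ _
          _ = (∑ i, E i (h (s i))) p := by
              rw [LinearMap.sum_apply]
              rfl
      rw [hdecomp]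
      refine Submodule.sum_mem _ fun i _ => ?_
      have h1 : h (s i) ∈ S := hNS _ (hh (s i))
      have h2 : E i (h (s i)) ∈ Submodule.map (E i) S := Submodule.mem_map_of_mem h1
      rw [hS, Submodule.map_smul''] at h2
      exact Submodule.smul_mono le_rfl le_top h2
    -- the map `γ(f, g) = g ∘ α - β ∘ f`, `R`-linearly
    let γ : ((P₁ →ₗ[Λ] Q₁) × (P₀ →ₗ[Λ] Q₀)) →ₗ[R] (P₁ →ₗ[Λ] Q₀) :=
      { toFun := fun fg => fg.2.comp α - β.comp fg.1
        map_add' := fun a b => by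
          ext p
          show (a.2 + b.2) (α p) - β ((a.1 + b.1) p) =
            (a.2 (α p) - β (a.1 p)) + (b.2 (α p) - β (b.1 p))
          rw [LinearMap.add_apply, LinearMap.add_apply, map_add]
          abel
        map_smul' := fun r a => by
          ext p
          show (r • a.2) (α p) - β ((r • a.1) p) = r • (a.2 (α p) - β (a.1 p))
          rw [LinearMap.smul_apply, LinearMap.smul_apply, β.map_smul_of_tower, smul_sub] }
    -- `Hom_Λ(P₁, Q₀)` is a noetherian `R`-module
    haveI : IsNoetherian R Q₀ := isNoetherian_of_isNoetherianRing_of_finite R Q₀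
    let Φ : (P₁ →ₗ[Λ] Q₀) →ₗ[R] (Fin n → Q₀) :=
      { toFun := fun h => fun i => h (s i)
        map_add' := fun a b => rfl
        map_smul' := fun r a => rfl }
    have hΦ : Function.Injective Φ := by
      intro a b hab
      refine LinearMap.ext_on hs ?_
      rintro x ⟨i, rfl⟩
      exact congrFun hab i
    haveI : IsNoetherian R (P₁ →ₗ[Λ] Q₀) := isNoetherian_of_injective Φ hΦ
    -- Nakayama
    set T := LinearMap.range γ with hT
    have hle : (⊤ : Submodule R (P₁ →ₗ[Λ] Q₀)) ≤ T ⊔ m • ⊤ := by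
      intro h _
      obtain ⟨f, g, hfg⟩ := H h
      have h1 : γ (f, g) ∈ T := LinearMap.mem_range_self _ _
      have h2 : h - γ (f, g) ∈ (m • ⊤ : Submodule R (P₁ →ₗ[Λ] Q₀)) := by
        apply key1
        intro p
        show h p - (g (α p) - β (f p)) ∈ NQ₀
        exact hfg p
      have h3 : h = γ (f, g) + (h - γ (f, g)) := by abel
      rw [h3]
      exact Submodule.add_mem_sup h1 h2
    have hT_top : (⊤ : Submodule R (P₁ →ₗ[Λ] Q₀)) ≤ T :=
      Submodule.le_of_le_smul_of_le_jacobson_bot (IsNoetherian.noetherian ⊤)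
        (IsLocalRing.maximalIdeal_le_jacobson ⊥) hle
    intro h
    obtain ⟨⟨f, g⟩, hfg⟩ := hT_top (Submodule.mem_top (x := h))
    exact ⟨f, g, hfg.symm⟩
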